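/- arXiv:2110.00718 — 9 statements merged into one kernel-verified Lean document; each statement's English description precedes it below -/
import Mathlib

section
/- For every graph G and every field F, G is 2-colorable if and only if the local orthogonality dimension of G over F is at most 2. -/
open Matrix

/-- An orthogonal representation of a graph `G` over a field `F` in dimension `t`. -/
def IsOrthRep {V F : Type*} [Field F] {t : ℕ} (G : SimpleGraph V) (u : V → Fin t → F) : Prop :=
  (∀ v, u v ⬝ᵥ u v ≠ 0) ∧ ∀ ⦃v w⦄, G.Adj v w → u v ⬝ᵥ u w = 0

/-- The representation has locality at most `ℓ`: the span of the vectors of every closed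
neighborhood has dimension at most `ℓ`. -/
def RepLocalityLE {V F : Type*} [Field F] {t : ℕ} (G : SimpleGraph V) (u : V → Fin t → F)
    (ℓ : ℕ) : Prop :=
  ∀ v, Module.finrank F (Submodule.span F (u '' insert v (G.neighborSet v))) ≤ ℓ

/-- The local orthogonality dimension of `G` over `F`. -/
noncomputable def locOrthDim {V : Type*} (G : SimpleGraph V) (F : Type*) [Field F] : ℕ :=
  sInf {ℓ | ∃ t : ℕ, ∃ u : V → Fin t → F, IsOrthRep G u ∧ RepLocalityLE G u ℓ}

/-- The orthogonality dimension of `G` over `F`. -/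
noncomputable def orthDim {V : Type*} (G : SimpleGraph V) (F : Type*) [Field F] : ℕ :=
  sInf {t | ∃ u : V → Fin t → F, IsOrthRep G u}

/-- An independent representation of `G` over `F`. -/
def IsIndRep {V F : Type*} [Field F] {t : ℕ} (G : SimpleGraph V) (u : V → Fin t → F) : Prop :=
  ∀ v, u v ∉ Submodule.span F (u '' G.neighborSet v)

/-- A proper coloring of `G`. -/
def IsProperColoring {V C : Type*} (G : SimpleGraph V) (c : V → C) : Prop :=
  ∀ ⦃v w⦄, G.Adj v w → c v ≠ c w

/-- The coloring has locality at most `ℓ`: at most `ℓ` colors in every closed neighborhood. -/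
def ColoringLocalityLE {V C : Type*} (G : SimpleGraph V) (c : V → C) (ℓ : ℕ) : Prop :=
  ∀ v, (c '' insert v (G.neighborSet v)).ncard ≤ ℓ

/-- The local chromatic number of `G`. -/
noncomputable def locChrom {V : Type*} (G : SimpleGraph V) : ℕ :=
  sInf {ℓ | ∃ c : V → ℕ, IsProperColoring G c ∧ ColoringLocalityLE G c ℓ}

/-- `M` represents the graph `G`. -/
def MatRepresents {V F : Type*} [Field F] (G : SimpleGraph V) (M : Matrix V V F) : Prop :=
  (∀ i, M i i ≠ 0) ∧ ∀ ⦃i j⦄, i ≠ j → ¬ G.Adj i j → M i j = 0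

/-- The minrank of `G` over `F`. -/
noncomputable def minrank {V : Type*} [Fintype V] (F : Type*) [Field F] (G : SimpleGraph V) : ℕ :=
  sInf {r | ∃ M : Matrix V V F, MatRepresents G M ∧ M.rank = r}

section Aux
variable {V F : Type*} [Field F] {t : ℕ} {G : SimpleGraph V} {u : V → Fin t → F}

lemma myNeZero (h : IsOrthRep G u) (v : V) : u v ≠ 0 := by
  intro hv
  exact h.1 v (by rw [hv]; simp)

lemma adjNotMem (h : IsOrthRep G u) {v w : V} (hvw : G.Adj v w) :
    u w ∉ Submodule.span F {u v} := by
  rw [Submodule.mem_span_singleton]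
  rintro ⟨a, ha⟩
  have h2 := h.2 hvw
  rw [← ha, dotProduct_smul, smul_eq_mul] at h2
  rcases mul_eq_zero.1 h2 with h' | h'
  · rw [h', zero_smul] at ha
    exact myNeZero h w ha.symm
  · exact h.1 v h' 

lemma pairLI (h : IsOrthRep G u) {v w : V} (hvw : G.Adj v w) :
    LinearIndependent F ![u v, u w] := by
  rw [LinearIndependent.pair_iff]
  intro s r hsr
  have hd : (s • u v + r • u w) ⬝ᵥ u v = s * (u v ⬝ᵥ u v) := by
    rw [add_dotProduct, smul_dotProduct, smul_dotProduct, dotProduct_comm (u w),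
      h.2 hvw, smul_eq_mul, smul_eq_mul, mul_zero, add_zero]
  rw [hsr, zero_dotProduct] at hd
  have hs : s = 0 := by
    rcases mul_eq_zero.1 hd.symm with h' | h' 
    · exact h'
    · exact absurd h' (h.1 v)
  subst hs
  simp only [zero_smul, zero_add] at hsr
  rcases smul_eq_zero.1 hsr with h' | h'
  · exact ⟨rfl, h'⟩
  · exact absurd h' (myNeZero h w)

lemma twoStep (h : IsOrthRep G u) (hloc : RepLocalityLE G u 2) {v w x : V}
    (hvw : G.Adj v w) (hwx : G.Adj w x) : u x ∈ Submodule.span F {u v} := by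
  set S := Submodule.span F (u '' insert w (G.neighborSet w)) with hS
  have hvS : u v ∈ S := Submodule.subset_span ⟨v, by simp [hvw.symm], rfl⟩
  have hwS : u w ∈ S := Submodule.subset_span ⟨w, by simp, rfl⟩
  have hxS : u x ∈ S := Submodule.subset_span ⟨x, by simp [hwx], rfl⟩
  have hT : Submodule.span F {u v, u w} ≤ S := by
    rw [Submodule.span_le]
    rintro y hy
    rcases hy with rfl | hy
    · exact hvS
    · rw [Set.mem_singleton_iff] at hy; subst hy; exact hwS
  have hrank : Module.finrank F (Submodule.span F {u v, u w}) = 2 := by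
    have h2 := finrank_span_eq_card (pairLI h hvw)
    have hr : Set.range ![u v, u w] = {u v, u w} := by
      simp [Matrix.range_cons, Matrix.range_empty, Set.pair_comm]
    rw [hr] at h2
    simpa using h2
  have hEq : Submodule.span F {u v, u w} = S :=
    Submodule.eq_of_le_of_finrank_le hT (by rw [hrank]; exact hloc w)
  rw [← hEq] at hxS
  rcases Submodule.mem_span_pair.1 hxS with ⟨a, b, hab⟩
  have hd : (a • u v + b • u w) ⬝ᵥ u w = b * (u w ⬝ᵥ u w) := by
    rw [add_dotProduct, smul_dotProduct, smul_dotProduct, h.2 hvw, smul_eq_mul,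
      smul_eq_mul, mul_zero, zero_add]
  rw [hab] at hd
  have h0 : u x ⬝ᵥ u w = 0 := by rw [dotProduct_comm]; exact h.2 hwx
  rw [h0] at hd
  have hb : b = 0 := by
    rcases mul_eq_zero.1 hd.symm with h' | h'
    · exact h'
    · exact absurd h' (h.1 w)
  rw [hb, zero_smul, add_zero] at hab
  exact Submodule.mem_span_singleton.2 ⟨a, hab⟩

lemma sameLine {x z r : Fin t → F} (hx : x ≠ 0) (hxr : x ∈ Submodule.span F {r})
    (hzr : z ∈ Submodule.span F {r}) : z ∈ Submodule.span F {x} := by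
  obtain ⟨a, ha⟩ := Submodule.mem_span_singleton.1 hxr
  obtain ⟨b, hb⟩ := Submodule.mem_span_singleton.1 hzr
  have ha0 : a ≠ 0 := by rintro rfl; rw [zero_smul] at ha; exact hx ha.symm
  refine Submodule.mem_span_singleton.2 ⟨b * a⁻¹, ?_⟩
  rw [← ha, ← hb, smul_smul]
  congr 1
  field_simp

lemma walkLemma (h : IsOrthRep G u) (hloc : RepLocalityLE G u 2) {a b : V} (p : G.Walk a b) :
    u b ∈ Submodule.span F {u a} ∨ ∃ w, G.Adj a w ∧ u b ∈ Submodule.span F {u w} := by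
  induction p with
  | nil => exact Or.inl (Submodule.mem_span_singleton_self _)
  | @cons a x b hax q ih =>
    rcases ih with hb | ⟨w', hw', hb⟩
    · exact Or.inr ⟨x, hax, hb⟩
    · have hwa : u w' ∈ Submodule.span F {u a} := twoStep h hloc hax hw'
      exact Or.inl ((Submodule.span_singleton_le_iff_mem _ _).2 hwa hb)

end Aux

theorem colorable_two_iff_locOrthDim_le_two {V : Type*} [Fintype V] (G : SimpleGraph V)
    (F : Type*) [Field F] :
    G.Colorable 2 ↔ locOrthDim G F ≤ 2 := by
  classical
  constructor
  · rintro ⟨c⟩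
    have hmem : 2 ∈ {ℓ | ∃ t : ℕ, ∃ u : V → Fin t → F, IsOrthRep G u ∧ RepLocalityLE G u ℓ} := by
      refine ⟨2, fun v => Pi.single (c v) 1, ⟨?_, ?_⟩, ?_⟩
      · intro v
        simp [dotProduct_single]
      · intro v w hvw
        have hne : c w ≠ c v := (c.valid hvw).symm
        simp [dotProduct_single, Pi.single_eq_of_ne hne]
      · intro v
        refine le_trans (Submodule.finrank_le _) ?_
        simp
    exact Nat.sInf_le hmem
  · intro hle
    have hne : {ℓ | ∃ t : ℕ, ∃ u : V → Fin t → F, IsOrthRep G u ∧ RepLocalityLE G u ℓ}.Nonempty := by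
      let e := Fintype.equivFin V
      refine ⟨Fintype.card V, Fintype.card V, fun v => Pi.single (e v) 1, ⟨?_, ?_⟩, ?_⟩
      · intro v; simp [dotProduct_single]
      · intro v w hvw
        have hne : e w ≠ e v := fun hh => hvw.ne' (e.injective hh)
        simp [dotProduct_single, Pi.single_eq_of_ne hne]
      · intro v
        refine le_trans (Submodule.finrank_le _) ?_
        simp
    obtain ⟨t, u, hrep, hloc'⟩ := Nat.sInf_mem hne
    have hloc : RepLocalityLE G u 2 := fun v => le_trans (hloc' v) hle
    let root : V → V := fun v => (G.connectedComponentMk v).out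
    have hreach : ∀ v, G.Reachable (root v) v := fun v =>
      SimpleGraph.ConnectedComponent.eq.mp (Quot.out_eq _)
    let c : V → Fin 2 := fun v => if u v ∈ Submodule.span F {u (root v)} then 0 else 1
    refine ⟨SimpleGraph.Coloring.mk c ?_⟩
    intro v w hvw hcvw
    have hroot : root v = root w :=
      congrArg Quot.out (SimpleGraph.ConnectedComponent.eq.mpr hvw.reachable)
    have hvne : u v ≠ 0 := myNeZero hrep v
    by_cases hv : u v ∈ Submodule.span F {u (root v)}
    · have hcv : c v = 0 := if_pos hv
      have hw : u w ∈ Submodule.span F {u (root w)} := by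
        by_contra hw
        have : c w = 1 := if_neg hw
        rw [hcv, this] at hcvw
        exact absurd hcvw (by decide)
      rw [← hroot] at hw
      exact adjNotMem hrep hvw (sameLine hvne hv hw)
    · have hcv : c v = 1 := if_neg hv
      have hw : u w ∉ Submodule.span F {u (root w)} := by
        intro hw
        have : c w = 0 := if_pos hw
        rw [hcv, this] at hcvw
        exact absurd hcvw (by decide)
      rw [← hroot] at hw
      rcases walkLemma hrep hloc (hreach v).some with hv' | ⟨x, hx, hv'⟩
      · exact hv hv'
      rcases walkLemma hrep hloc ((hroot ▸ hreach w : G.Reachable (root v) w)).some with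
        hw' | ⟨y, hy, hw'⟩
      · exact hw hw'
      have hyx : u y ∈ Submodule.span F {u x} := twoStep hrep hloc hx.symm hy
      have hwx : u w ∈ Submodule.span F {u x} :=
        (Submodule.span_singleton_le_iff_mem _ _).2 hyx hw'
      exact adjNotMem hrep hvw (sameLine hvne hv' hwx)
end

section
/- For every odd integer r ≥ 3 and every field F, the local orthogonality dimension of the cycle C_r on r vertices over F is strictly greater than 2. -/
open Matrix

lemma parallel_of_dim2 {F : Type*} [Field F] {t : ℕ} {a b c : Fin t → F}
    (hbb : b ⬝ᵥ b ≠ 0) (haa : a ⬝ᵥ a ≠ 0) (hcc : c ⬝ᵥ c ≠ 0)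
    (hba : b ⬝ᵥ a = 0) (hbc : b ⬝ᵥ c = 0)
    (hdim : Module.finrank F (Submodule.span F {b, a, c}) ≤ 2) :
    ∃ k : F, k ≠ 0 ∧ c = k • a := by
  by_contra h
  push_neg at h
  have ha0 : a ≠ 0 := fun h' => haa (by simp [h'])
  have hc0 : c ≠ 0 := fun h' => hcc (by simp [h'])
  have hind : LinearIndependent F ![a, c] := by
    rw [LinearIndependent.pair_iff' ha0]
    intro k hk
    rcases eq_or_ne k 0 with rfl | hk0
    · exact hc0 (by simp [← hk])
    · exact h k hk0 hk.symm
  have hb : b ∉ Submodule.span F ({a, c} : Set (Fin t → F)) := by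
    intro hmem
    rw [Submodule.mem_span_pair] at hmem
    obtain ⟨α, β, hab⟩ := hmem
    apply hbb
    have := congrArg (fun x => b ⬝ᵥ x) hab
    simpa [dotProduct_add, dotProduct_smul, hba, hbc] using this.symm
  have h3 : LinearIndependent F ![b, a, c] := by
    rw [show (![b, a, c] : Fin 3 → Fin t → F) = Fin.cons b ![a, c] from rfl,
      linearIndependent_fin_cons]
    refine ⟨hind, ?_⟩
    simpa [Set.pair_comm] using hb
  have := finrank_span_eq_card h3
  have hr : Set.range ![b, a, c] = {b, a, c} := by
    ext x
    simp [Matrix.range_cons, Matrix.range_empty]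
    tauto
  rw [hr] at this
  simp [this] at hdim

open Fin.NatCast Fin.CommRing in
theorem two_lt_locOrthDim_cycleGraph (r : ℕ) (hr : 3 ≤ r) (hodd : Odd r)
    (F : Type*) [Field F] :
    2 < locOrthDim (SimpleGraph.cycleGraph r) F := by
  obtain ⟨n, rfl⟩ : ∃ n, r = n + 2 := ⟨r - 2, by omega⟩
  set G := SimpleGraph.cycleGraph (n + 2) with hG
  set S : Set ℕ :=
    {ℓ | ∃ t : ℕ, ∃ u : Fin (n + 2) → Fin t → F, IsOrthRep G u ∧ RepLocalityLE G u ℓ} with hS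
  have hadj : ∀ v w : Fin (n + 2), v - w = 1 ∨ w - v = 1 → G.Adj v w := fun v w h =>
    SimpleGraph.cycleGraph_adj.mpr h
  have hmem : (n + 2) ∈ S := by
    refine ⟨n + 2, fun v => Pi.single v 1, ⟨fun v => ?_, fun v w h => ?_⟩, fun v => ?_⟩
    · simp [dotProduct_single]
    · have hne : w ≠ v := h.ne'
      simp [dotProduct_single, Pi.single_apply, hne]
    · refine le_trans (Submodule.finrank_le _) ?_
      simp
  have hlb : ∀ ℓ ∈ S, 3 ≤ ℓ := by
    rintro ℓ ⟨t, u, ⟨hself, horth⟩, hloc⟩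
    by_contra hcon
    push_neg at hcon
    have hℓ2 : ℓ ≤ 2 := by omega
    have step : ∀ w : Fin (n + 2), ∃ k : F, k ≠ 0 ∧ u (w + 2) = k • u w := by
      intro w
      have h1 : G.Adj (w + 1) w := hadj _ _ (Or.inl (by ring))
      have h2 : G.Adj (w + 1) (w + 2) := hadj _ _ (Or.inr (by ring))
      have hN : (insert (w + 1) (G.neighborSet (w + 1)) : Set (Fin (n + 2)))
          = {w + 1, w, w + 2} := by
        rw [hG, SimpleGraph.cycleGraph_neighborSet]
        have e1 : w + 1 - 1 = w := by ring
        have e2 : w + 1 + 1 = w + 2 := by ring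
        rw [e1, e2]
      have hdim : Module.finrank F
          (Submodule.span F {u (w + 1), u w, u (w + 2)}) ≤ 2 := by
        have := hloc (w + 1)
        rw [hN] at this
        rw [Set.image_insert_eq, Set.image_insert_eq, Set.image_singleton] at this
        exact this.trans hℓ2
      exact parallel_of_dim2 (hself (w + 1)) (hself w) (hself (w + 2))
        (horth h1) (horth h2) hdim
    have chain : ∀ m : ℕ, ∃ k : F, k ≠ 0 ∧ u ((2 * m : ℕ) : Fin (n + 2)) = k • u 0 := by
      intro m
      induction m with
      | zero => exact ⟨1, one_ne_zero, by simp⟩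
      | succ m ih =>
        obtain ⟨k, hk, hu⟩ := ih
        obtain ⟨k', hk', hu'⟩ := step ((2 * m : ℕ) : Fin (n + 2))
        refine ⟨k' * k, mul_ne_zero hk' hk, ?_⟩
        have hcast : ((2 * (m + 1) : ℕ) : Fin (n + 2)) = ((2 * m : ℕ) : Fin (n + 2)) + 2 := by
          push_cast
          ring
        rw [hcast, hu', hu, smul_smul]
    obtain ⟨m, hm⟩ : ∃ m, n + 3 = 2 * m := by
      obtain ⟨j, hj⟩ := hodd
      exact ⟨j + 1, by omega⟩
    obtain ⟨k, hk, hu⟩ := chain m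
    have hcast : ((2 * m : ℕ) : Fin (n + 2)) = 1 := by
      rw [← hm, show n + 3 = (n + 2) + 1 from rfl, Nat.cast_add, Fin.natCast_self,
        zero_add, Nat.cast_one]
    rw [hcast] at hu
    have h01 : u 0 ⬝ᵥ u 1 = 0 := horth (hadj 0 1 (Or.inr (by ring)))
    apply hself 1
    calc u 1 ⬝ᵥ u 1 = (k • u 0) ⬝ᵥ u 1 := by rw [← hu]
      _ = k * (u 0 ⬝ᵥ u 1) := by rw [smul_dotProduct]; simp [smul_eq_mul]
      _ = 0 := by rw [h01, mul_zero]
  have hmain := Nat.sInf_mem ⟨n + 2, hmem⟩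
  have := hlb _ hmain
  have heq : locOrthDim G F = sInf S := rfl
  omega
end

section
/- Let G=(V,E) be a graph and F a field. Suppose there exist a proper coloring c: V → [m] of G and vectors u_1,...,u_m ∈ F^t such that for every vertex v, the vectors {u_{c(v')} : v' ∈ {v} ∪ N(v)} indexed by colors of the closed neighborhood of v are linearly independent over F. Then the minrank over F of the complement of G is at most t. -/
open Matrix

theorem minrank_compl_le_of_coloring_indep {V : Type*} [Fintype V] (G : SimpleGraph V)
    (F : Type*) [Field F] {m t : ℕ} (c : V → Fin m) (u : Fin m → Fin t → F)
    (hc : IsProperColoring G c)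
    (hind : ∀ v : V, LinearIndependent F
      (fun x : ↥(c '' insert v (G.neighborSet v)) => u ↑x)) :
    minrank F Gᶜ ≤ t := by
  classical
  have key : ∀ v : V, ∃ g : Module.Dual F (Fin t → F),
      g (u (c v)) ≠ 0 ∧ ∀ w, G.Adj v w → g (u (c w)) = 0 := by
    intro v
    set p : Submodule F (Fin t → F) :=
      Submodule.span F ((fun w => u (c w)) '' G.neighborSet v) with hp
    have hmem : c v ∈ c '' insert v (G.neighborSet v) := ⟨v, Set.mem_insert _ _, rfl⟩
    have hnot : u (c v) ∉ p := by
      intro h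
      have hle : p ≤ Submodule.span F
          ((fun x : ↥(c '' insert v (G.neighborSet v)) => u ↑x) ''
            {x | x ≠ ⟨c v, hmem⟩}) := by
        rw [hp, Submodule.span_le]
        rintro _ ⟨w, hw, rfl⟩
        apply Submodule.subset_span
        refine ⟨⟨c w, ⟨w, Set.mem_insert_of_mem _ hw, rfl⟩⟩, ?_, rfl⟩
        simp only [Set.mem_setOf_eq, ne_eq, Subtype.mk.injEq]
        exact fun hcw => (hc hw) (congrArg Subtype.val hcw).symm
      exact (hind v).notMem_span_image (x := ⟨c v, hmem⟩) (by simp) (hle h)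
    obtain ⟨g, hg, hgp⟩ := p.exists_dual_map_eq_bot_of_notMem hnot inferInstance
    refine ⟨g, hg, fun w hw => ?_⟩
    have h1 : u (c w) ∈ p := Submodule.subset_span ⟨w, hw, rfl⟩
    have h2 : g (u (c w)) ∈ p.map g := Submodule.mem_map_of_mem h1
    rw [hgp] at h2
    exact (Submodule.mem_bot F).mp h2
  choose g hgd hgo using key
  set B : Matrix (Fin t) V F := fun i w => u (c w) i with hB
  set A : Matrix V (Fin t) F := fun v i => g v fun j => if i = j then 1 else 0 with hA
  set M : Matrix V V F := A * B with hMdef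
  have hM : ∀ v w, M v w = g v (u (c w)) := by
    intro v w
    rw [hMdef, Matrix.mul_apply, LinearMap.pi_apply_eq_sum_univ (g v) (u (c w))]
    refine Finset.sum_congr rfl fun i _ => ?_
    rw [hA, hB]
    simp [mul_comm]
  have hrep : MatRepresents Gᶜ M := by
    constructor
    · intro v; rw [hM]; exact hgd v
    · intro i j hij hadj
      rw [SimpleGraph.compl_adj] at hadj
      push_neg at hadj
      rw [hM]
      exact hgo i j (hadj hij)
  have hrank : M.rank ≤ t := by
    calc M.rank ≤ B.rank := Matrix.rank_mul_le_right A B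
    _ ≤ Fintype.card (Fin t) := Matrix.rank_le_card_height B
    _ = t := Fintype.card_fin t
  exact le_trans (Nat.sInf_le ⟨M, hrep, rfl⟩) hrank
end

section
/- Let G be a graph, F a field, and suppose there exist a proper coloring of G with m colors and locality ℓ, and m vectors in F^t such that every ℓ of them are linearly independent over F. Then the minrank over F of the complement of G is at most t. -/
open Matrix

theorem minrank_compl_le_of_local_coloring {V : Type*} [Fintype V] (G : SimpleGraph V)
    (F : Type*) [Field F] {m t ℓ : ℕ} (c : V → Fin m) (u : Fin m → Fin t → F)
    (hc : IsProperColoring G c) (hloc : ColoringLocalityLE G c ℓ)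
    (hind : ∀ s : Finset (Fin m), s.card ≤ ℓ →
      LinearIndependent F (fun x : ↥s => u ↑x)) :
    minrank F Gᶜ ≤ t := by
  classical
  -- Step 1: for each vertex, find a separating vector
  have key : ∀ i : V, ∃ w : Fin t → F, w ⬝ᵥ u (c i) ≠ 0 ∧
      ∀ ⦃j⦄, G.Adj i j → w ⬝ᵥ u (c j) = 0 := by
    intro i
    have hfin : (c '' insert i (G.neighborSet i)).Finite := Set.toFinite _
    have hcard : hfin.toFinset.card ≤ ℓ := by
      rw [← Set.ncard_eq_toFinset_card]; exact hloc i
    have hli := hind hfin.toFinset hcard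
    have hci : c i ∈ hfin.toFinset := by
      simp only [Set.Finite.mem_toFinset]
      exact ⟨i, Set.mem_insert _ _, rfl⟩
    have hnot : u (c i) ∉ Submodule.span F (u '' (c '' G.neighborSet i)) := by
      have hx : (⟨c i, hci⟩ : ↥hfin.toFinset) ∉
          {y : ↥hfin.toFinset | (y : Fin m) ∈ c '' G.neighborSet i} := by
        rintro ⟨wv, hwv, hcw⟩
        exact hc hwv hcw.symm
      have h1 := hli.notMem_span_image hx
      have himg : (fun y : ↥hfin.toFinset => u ↑y) ''
          {y : ↥hfin.toFinset | (y : Fin m) ∈ c '' G.neighborSet i}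
          = u '' (c '' G.neighborSet i) := by
        ext x
        constructor
        · rintro ⟨y, hy, rfl⟩
          exact ⟨y, hy, rfl⟩
        · rintro ⟨a, ha, rfl⟩
          have haS : a ∈ hfin.toFinset := by
            simp only [Set.Finite.mem_toFinset]
            obtain ⟨wv, hwv, rfl⟩ := ha
            exact ⟨wv, Set.mem_insert_of_mem _ hwv, rfl⟩
          exact ⟨⟨a, haS⟩, ha, rfl⟩
      rwa [himg] at h1
    set p := Submodule.span F (u '' (c '' G.neighborSet i)) with hp
    have hq : (Submodule.Quotient.mk (u (c i)) : (Fin t → F) ⧸ p) ≠ 0 := by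
      simpa [Submodule.Quotient.mk_eq_zero] using hnot
    have hexφ : ∃ φ : Module.Dual F ((Fin t → F) ⧸ p),
        φ (Submodule.Quotient.mk (u (c i))) ≠ 0 := by
      by_contra h
      push_neg at h
      exact hq ((Module.forall_dual_apply_eq_zero_iff F _).mp h)
    obtain ⟨φ, hφ⟩ := hexφ
    set f : (Fin t → F) →ₗ[F] F := φ.comp p.mkQ with hf
    have hdot : ∀ y : Fin t → F, (fun k => f (Pi.single k 1)) ⬝ᵥ y = f y := by
      intro y
      conv_rhs => rw [pi_eq_sum_univ y]
      rw [map_sum]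
      simp only [_root_.map_smul, smul_eq_mul, dotProduct]
      refine Finset.sum_congr rfl fun k _ => ?_
      rw [mul_comm]
      congr 1
      congr 1
      funext j
      by_cases h : k = j <;> simp [Pi.single_apply, h, eq_comm]
    refine ⟨fun k => f (Pi.single k 1), ?_, ?_⟩
    · rw [hdot]
      simpa [hf, Submodule.mkQ_apply] using hφ
    · intro j hj
      rw [hdot]
      have hmem : u (c j) ∈ p := Submodule.subset_span ⟨c j, ⟨j, hj, rfl⟩, rfl⟩
      simp [hf, Submodule.mkQ_apply, (Submodule.Quotient.mk_eq_zero p).mpr hmem]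
  choose w hw1 hw2 using key
  set A : Matrix V (Fin t) F := fun i k => w i k with hA
  set B : Matrix (Fin t) V F := fun k j => u (c j) k with hB
  set M : Matrix V V F := A * B with hM
  have hMij : ∀ i j, M i j = w i ⬝ᵥ u (c j) := fun i j => rfl
  have hrep : MatRepresents Gᶜ M := by
    constructor
    · intro i; rw [hMij]; exact hw1 i
    · intro i j hij hnadj
      rw [hMij]
      apply hw2
      by_contra hna
      exact hnadj ⟨hij, hna⟩
  have hrank : M.rank ≤ t := by
    calc M.rank ≤ B.rank := Matrix.rank_mul_le_right A B
    _ ≤ Fintype.card (Fin t) := B.rank_le_card_height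
    _ = t := Fintype.card_fin t
  exact le_trans (Nat.sInf_le ⟨M, hrep, rfl⟩) hrank
end

section
/- Let G be a graph on n vertices and F a field with |F| ≥ n. Then the minrank over F of the complement of G is at most the local chromatic number of G. -/
open Matrix

theorem minrank_compl_le_locChrom {V : Type*} [Fintype V] (G : SimpleGraph V)
    (F : Type*) [Field F] (hF : (Fintype.card V : Cardinal) ≤ Cardinal.mk F) :
    minrank F Gᶜ ≤ locChrom G := by
  classical
  have hne : {ℓ | ∃ c : V → ℕ, IsProperColoring G c ∧ ColoringLocalityLE G c ℓ}.Nonempty := by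
    refine ⟨Fintype.card V, fun v => (Fintype.equivFin V v : ℕ), ?_, ?_⟩
    · intro v w h hvw
      exact G.ne_of_adj h ((Fintype.equivFin V).injective (Fin.val_injective hvw))
    · intro v
      calc ((fun v => ((Fintype.equivFin V v : ℕ))) '' insert v (G.neighborSet v)).ncard
          ≤ (insert v (G.neighborSet v)).ncard := Set.ncard_image_le (Set.toFinite _)
        _ ≤ (Set.univ : Set V).ncard :=
            Set.ncard_le_ncard (Set.subset_univ _) (Set.toFinite _)
        _ = Fintype.card V := by rw [Set.ncard_univ, Nat.card_eq_fintype_card]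
  obtain ⟨c, hc, hloc⟩ :
      ∃ c : V → ℕ, IsProperColoring G c ∧ ColoringLocalityLE G c (locChrom G) :=
    Nat.sInf_mem hne
  have hcard : Cardinal.mk (ULift (Fin (Fintype.card V))) ≤ Cardinal.mk F := by
    simpa using hF
  obtain ⟨e⟩ := (Cardinal.le_def _ _).mp hcard
  have hn : Fintype.card (Set.range c) ≤ Fintype.card V := Fintype.card_range_le c
  set e0 := Fintype.equivFin (Set.range c) with he0
  set g : ℕ → F := fun n =>
    if h : n ∈ Set.range c then e (ULift.up (Fin.castLE hn (e0 ⟨n, h⟩))) else 0 with hgdef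
  have hg : ∀ v w : V, g (c v) = g (c w) → c v = c w := by
    intro v w h
    simp only [hgdef, dif_pos (Set.mem_range_self v), dif_pos (Set.mem_range_self w)] at h
    have h2 := e.injective h
    have h3 := Fin.castLE_injective hn (ULift.up_injective h2)
    exact Subtype.ext_iff.mp (e0.injective h3)
  set a : V → F := fun v => g (c v) with hadef
  set A : V → Finset F := fun v =>
    (Set.toFinite (a '' insert v (G.neighborSet v))).toFinset with hAdef
  have haA : ∀ v, a v ∈ A v := by
    intro v
    simp only [hAdef, Set.Finite.mem_toFinset]
    exact ⟨v, Set.mem_insert _ _, rfl⟩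
  have hAcard : ∀ v, (A v).card ≤ locChrom G := by
    intro v
    have h1 : a '' insert v (G.neighborSet v) = g '' (c '' insert v (G.neighborSet v)) := by
      rw [← Set.image_comp]; rfl
    have h2 : (A v).card = (a '' insert v (G.neighborSet v)).ncard :=
      (Set.ncard_eq_toFinset_card _ _).symm
    rw [h2, h1]
    exact le_trans (Set.ncard_image_le (Set.toFinite _)) (hloc v)
  set T : V → Finset F := fun v => (A v).erase (a v) with hTdef
  have hTcard : ∀ v, (T v).card < locChrom G := by
    intro v
    have h1 : (T v).card = (A v).card - 1 := Finset.card_erase_of_mem (haA v)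
    have h2 : 1 ≤ (A v).card := Finset.card_pos.mpr ⟨a v, haA v⟩
    have h3 := hAcard v
    omega
  set p : V → Polynomial F := fun v => ∏ s ∈ T v, (Polynomial.X - Polynomial.C s) with hpdef
  have hdeg : ∀ v, (p v).natDegree < locChrom G := by
    intro v
    have : (p v).natDegree = (T v).card := by
      rw [hpdef]
      rw [Polynomial.natDegree_prod_of_monic _ _ (fun s _ => Polynomial.monic_X_sub_C s)]
      simp [Polynomial.natDegree_X_sub_C]
    rw [this]; exact hTcard v
  set M : Matrix V V F := fun v w => (p v).eval (a w) with hMdef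
  have hrep : MatRepresents Gᶜ M := by
    constructor
    · intro v
      simp only [hMdef, hpdef, Polynomial.eval_prod, Polynomial.eval_sub, Polynomial.eval_X,
        Polynomial.eval_C]
      rw [Finset.prod_ne_zero_iff]
      intro s hs
      exact sub_ne_zero_of_ne (Ne.symm (Finset.ne_of_mem_erase hs))
    · intro v w hvw hadj
      have hGadj : G.Adj v w := by
        by_contra h
        exact hadj ((SimpleGraph.compl_adj G v w).mpr ⟨hvw, h⟩)
      have hmem : a w ∈ T v := by
        refine Finset.mem_erase.mpr ⟨?_, ?_⟩
        · intro h
          exact hc hGadj (hg w v h).symm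
        · simp only [hAdef, Set.Finite.mem_toFinset]
          exact ⟨w, Set.mem_insert_of_mem _ hGadj, rfl⟩
      simp only [hMdef, hpdef, Polynomial.eval_prod]
      exact Finset.prod_eq_zero hmem (by simp)
  set P : Matrix V (Fin (locChrom G)) F := fun v k => (p v).coeff k with hPdef
  set Q : Matrix (Fin (locChrom G)) V F := fun k w => (a w) ^ (k : ℕ) with hQdef
  have hMeq : M = P * Q := by
    ext v w
    simp only [hMdef, Matrix.mul_apply, hPdef, hQdef]
    rw [Polynomial.eval_eq_sum_range' (hdeg v), ← Fin.sum_univ_eq_sum_range]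
    rfl
  have hrank : M.rank ≤ locChrom G := by
    rw [hMeq]
    calc (P * Q).rank ≤ Q.rank := Matrix.rank_mul_le_right P Q
      _ ≤ Fintype.card (Fin (locChrom G)) := Matrix.rank_le_card_height Q
      _ = locChrom G := Fintype.card_fin _
  exact le_trans (Nat.sInf_le ⟨M, hrep, rfl⟩) hrank
end

section
/- Let H be a collection of h subsets of [m], each of size at most ℓ, and let F be a finite field of size q. Set t = ℓ + ⌈log_q h⌉. Then there exist vectors u_1,...,u_m ∈ F^t such that for every H' ∈ H, the vectors {u_i : i ∈ H'} are linearly independent over F. -/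
open Matrix

set_option maxHeartbeats 1000000

lemma aux_span_card_le {F : Type*} [Field F] [Fintype F] {t : ℕ} (s : Set (Fin t → F)) (k : ℕ)
    [DecidablePred fun v : Fin t → F => v ∈ Submodule.span F s]
    (hs : Module.finrank F (Submodule.span F s) ≤ k) :
    (Finset.univ.filter (fun v : Fin t → F => v ∈ Submodule.span F s)).card
      ≤ Fintype.card F ^ k := by
  calc (Finset.univ.filter (fun v : Fin t → F => v ∈ Submodule.span F s)).card
      = Fintype.card {v : Fin t → F // v ∈ Submodule.span F s} := (Fintype.card_subtype _).symm
    _ = Fintype.card F ^ Module.finrank F (Submodule.span F s) := Module.card_eq_pow_finrank (K := F)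
    _ ≤ Fintype.card F ^ k := Nat.pow_le_pow_right Fintype.card_pos hs

lemma aux_finrank_span_image_le {F : Type*} [Field F] [DecidableEq F] {m t : ℕ}
    (u : Fin m → Fin t → F) (s : Set (Fin m)) (H : Finset (Fin m)) (hsub : s ⊆ ↑H) :
    Module.finrank F (Submodule.span F (u '' s)) ≤ H.card := by
  have h1 : u '' s ⊆ ((H.image u : Finset (Fin t → F)) : Set (Fin t → F)) := by
    rintro _ ⟨i, hi, rfl⟩
    simp only [Finset.coe_image, Set.mem_image, Finset.mem_coe]
    exact ⟨i, hsub hi, rfl⟩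
  calc Module.finrank F (Submodule.span F (u '' s))
      ≤ Module.finrank F (Submodule.span F ((H.image u : Finset (Fin t → F)) : Set (Fin t → F))) :=
        Submodule.finrank_mono (Submodule.span_mono h1)
    _ ≤ (H.image u).card := finrank_span_finset_le_card _
    _ ≤ H.card := Finset.card_image_le


theorem exists_vectors_linearIndependent_on_family {F : Type*} [Field F] [Fintype F]
    (m ℓ : ℕ) (𝓗 : Finset (Finset (Fin m))) (hsize : ∀ H ∈ 𝓗, H.card ≤ ℓ) :
    ∃ u : Fin m → Fin (ℓ + Nat.clog (Fintype.card F) 𝓗.card) → F,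
      ∀ H ∈ 𝓗, LinearIndependent F (fun x : ↥H => u ↑x) := by
  classical
  set q := Fintype.card F with hq
  set t := ℓ + Nat.clog q 𝓗.card with ht
  have hq1 : 1 < q := Fintype.one_lt_card
  have key : ∀ n : ℕ, ∃ u : Fin m → (Fin t → F),
      ∀ H ∈ 𝓗, LinearIndependent F
        (fun x : ↥{i : Fin m | i ∈ H ∧ i.val < n} => u ↑x) := by
    intro n
    induction n with
    | zero =>
      refine ⟨fun _ _ => 0, fun H hH => ?_⟩
      haveI : IsEmpty ↥{i : Fin m | i ∈ H ∧ i.val < 0} :=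
        ⟨fun x => Nat.not_lt_zero _ x.2.2⟩
      exact linearIndependent_empty_type
    | succ n ih =>
      obtain ⟨u, hu⟩ := ih
      by_cases hnm : n < m
      · set nn : Fin m := ⟨n, hnm⟩ with hnn
        have hgood : ∃ v : Fin t → F, ∀ H ∈ 𝓗, nn ∈ H →
            v ∉ Submodule.span F (u '' {i : Fin m | i ∈ H ∧ i.val < n}) := by
          set 𝓖 := 𝓗.filter (fun H => nn ∈ H) with h𝓖
          have hspan : ∀ H ∈ 𝓖,
              (Finset.univ.filter
                (fun v : Fin t → F =>
                  v ∈ Submodule.span F (u '' {i : Fin m | i ∈ H ∧ i.val < n}))).card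
                ≤ q ^ (ℓ - 1) := by
            intro H hHG
            obtain ⟨hH, hnH⟩ := Finset.mem_filter.mp hHG
            have hfr : Module.finrank F
                (Submodule.span F (u '' {i : Fin m | i ∈ H ∧ i.val < n})) ≤ ℓ - 1 := by
              have hsub : {i : Fin m | i ∈ H ∧ i.val < n}
                  ⊆ ((H.erase nn : Finset (Fin m)) : Set (Fin m)) := by
                intro i hi
                simp only [Finset.coe_erase, Set.mem_diff, Finset.mem_coe,
                  Set.mem_singleton_iff]
                exact ⟨hi.1, fun h => by simp only [h] at hi; exact Nat.lt_irrefl n hi.2⟩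
              calc Module.finrank F (Submodule.span F (u '' {i : Fin m | i ∈ H ∧ i.val < n}))
                  ≤ (H.erase nn).card := aux_finrank_span_image_le u _ _ hsub
                _ = H.card - 1 := Finset.card_erase_of_mem hnH
                _ ≤ ℓ - 1 := Nat.sub_le_sub_right (hsize H hH) 1
            exact aux_span_card_le _ _ hfr
          set bad : Finset (Fin t → F) := 𝓖.biUnion (fun H =>
            Finset.univ.filter
              (fun v : Fin t → F =>
                v ∈ Submodule.span F (u '' {i : Fin m | i ∈ H ∧ i.val < n}))) with hbad
          rcases 𝓖.eq_empty_or_nonempty with hG | hG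
          · refine ⟨0, fun H hH hnH => absurd (Finset.mem_filter.mpr ⟨hH, hnH⟩ : H ∈ 𝓖) ?_⟩
            rw [← h𝓖, hG]; exact Finset.notMem_empty H
          · have hℓ : 1 ≤ ℓ := by
              obtain ⟨H0, hH0⟩ := hG
              obtain ⟨hH0', hnH0⟩ := Finset.mem_filter.mp hH0
              calc 1 ≤ H0.card := Finset.card_pos.mpr ⟨nn, hnH0⟩
                _ ≤ ℓ := hsize H0 hH0'
            have hbadcard : bad.card < q ^ t := by
              calc bad.card ≤ ∑ H ∈ 𝓖, (Finset.univ.filter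
                    (fun v : Fin t → F =>
                      v ∈ Submodule.span F (u '' {i : Fin m | i ∈ H ∧ i.val < n}))).card :=
                  Finset.card_biUnion_le
                _ ≤ ∑ _H ∈ 𝓖, q ^ (ℓ - 1) := Finset.sum_le_sum hspan
                _ = 𝓖.card * q ^ (ℓ - 1) := by rw [Finset.sum_const, smul_eq_mul]
                _ ≤ 𝓗.card * q ^ (ℓ - 1) :=
                  Nat.mul_le_mul_right _ (Finset.card_le_card (Finset.filter_subset _ _))
                _ ≤ q ^ Nat.clog q 𝓗.card * q ^ (ℓ - 1) :=
                  Nat.mul_le_mul_right _ (Nat.le_pow_clog hq1 _)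
                _ = q ^ (Nat.clog q 𝓗.card + (ℓ - 1)) := (pow_add _ _ _).symm
                _ < q ^ t := by
                  apply Nat.pow_lt_pow_right hq1
                  rw [ht, Nat.add_comm ℓ]
                  exact Nat.add_lt_add_left (Nat.sub_lt hℓ Nat.one_pos) _
            have hex : ∃ v : Fin t → F, v ∉ bad := by
              by_contra h
              push_neg at h
              have : bad = Finset.univ := Finset.eq_univ_iff_forall.mpr h
              rw [this] at hbadcard
              have hcardV : Fintype.card (Fin t → F) = q ^ t := by
                rw [hq]; simp [Fintype.card_fun]
              rw [Finset.card_univ, hcardV] at hbadcard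
              exact Nat.lt_irrefl _ hbadcard
            obtain ⟨v, hv⟩ := hex
            refine ⟨v, fun H hH hnH hmem => hv ?_⟩
            exact Finset.mem_biUnion.mpr ⟨H, Finset.mem_filter.mpr ⟨hH, hnH⟩,
              Finset.mem_filter.mpr ⟨Finset.mem_univ _, hmem⟩⟩
        obtain ⟨v, hv⟩ := hgood
        refine ⟨Function.update u nn v, fun H hH => ?_⟩
        have hagree : ∀ i ∈ {i : Fin m | i ∈ H ∧ i.val < n},
            Function.update u nn v i = u i := fun i hi =>
          Function.update_of_ne (fun h => by simp only [h] at hi; exact Nat.lt_irrefl n hi.2) _ _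
        have hfun : (fun x : ↥{i : Fin m | i ∈ H ∧ i.val < n} => Function.update u nn v ↑x)
            = fun x : ↥{i : Fin m | i ∈ H ∧ i.val < n} => u ↑x :=
          funext fun x => hagree _ x.2
        by_cases hnH : nn ∈ H
        · have hset : {i : Fin m | i ∈ H ∧ i.val < n + 1}
              = insert nn {i : Fin m | i ∈ H ∧ i.val < n} := by
            ext i
            simp only [Set.mem_setOf_eq, Set.mem_insert_iff]
            constructor
            · rintro ⟨hiH, hin⟩
              rcases Nat.lt_succ_iff_lt_or_eq.mp hin with h | h
              · exact Or.inr ⟨hiH, h⟩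
              · have hi' : i = nn := Fin.ext h
                exact Or.inl hi'
            · rintro (rfl | ⟨hiH, hin⟩)
              · exact ⟨hnH, Nat.lt_succ_self n⟩
              · exact ⟨hiH, hin.trans (Nat.lt_succ_self n)⟩
          rw [hset]
          have hns : nn ∉ {i : Fin m | i ∈ H ∧ i.val < n} := fun h => Nat.lt_irrefl n h.2
          change LinearIndepOn F (Function.update u nn v) _; rw [linearIndepOn_insert hns, LinearIndepOn]
          constructor
          · rw [hfun]; exact hu H hH
          · rw [Function.update_self]
            have himg : Function.update u nn v '' {i : Fin m | i ∈ H ∧ i.val < n}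
                = u '' {i : Fin m | i ∈ H ∧ i.val < n} := Set.image_congr hagree
            rw [himg]
            exact hv H hH hnH
        · have hset : {i : Fin m | i ∈ H ∧ i.val < n + 1}
              = {i : Fin m | i ∈ H ∧ i.val < n} := by
            ext i
            simp only [Set.mem_setOf_eq]
            constructor
            · rintro ⟨hiH, hin⟩
              refine ⟨hiH, ?_⟩
              rcases Nat.lt_succ_iff_lt_or_eq.mp hin with h | h
              · exact h
              · have hi' : i = nn := Fin.ext h
                rw [hi'] at hiH
                exact absurd hiH hnH
            · rintro ⟨hiH, hin⟩
              exact ⟨hiH, hin.trans (Nat.lt_succ_self n)⟩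
          rw [hset, hfun]
          exact hu H hH
      · refine ⟨u, fun H hH => ?_⟩
        have hset : {i : Fin m | i ∈ H ∧ i.val < n + 1}
            = {i : Fin m | i ∈ H ∧ i.val < n} := by
          ext i
          simp only [Set.mem_setOf_eq]
          exact ⟨fun h => ⟨h.1, lt_of_lt_of_le i.isLt (le_of_not_gt hnm)⟩,
                 fun h => ⟨h.1, h.2.trans (Nat.lt_succ_self n)⟩⟩
        rw [hset]
        exact hu H hH
  obtain ⟨u, hu⟩ := key m
  refine ⟨u, fun H hH => ?_⟩
  have hset : {i : Fin m | i ∈ H ∧ i.val < m} = (↑H : Set (Fin m)) := by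
    ext i
    simp [i.isLt]
  have h2 := hu H hH
  rw [hset] at h2
  exact h2
end

section
/- For every graph G on n vertices and every finite field F of size q, the minrank of G over F is at most the local orthogonality dimension of the complement of G over F plus ⌈log_q n⌉. -/
open Matrix

section Helpers

open Module Submodule Finset

variable {F : Type*} [Field F]

/-- Counting argument: there is a single linear map `F^t → F^(ℓ+k)` injective on every
member of a family of at most `q^k` subspaces, each of dimension at most `ℓ`. -/
private lemma exists_good_map {V : Type*} [Fintype V] [Fintype F] {t ℓ k : ℕ}
    (hcard : Fintype.card V ≤ Fintype.card F ^ k)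
    (W : V → Submodule F (Fin t → F)) (hW : ∀ v, finrank F (W v) ≤ ℓ) :
    ∃ A : Matrix (Fin (ℓ + k)) (Fin t) F, ∀ v, ∀ x ∈ W v, x ≠ 0 → A *ᵥ x ≠ 0 := by
  classical
  rcases Nat.eq_zero_or_pos t with ht | ht
  · subst ht
    exact ⟨0, fun v x _ hx0 => absurd (Subsingleton.elim x 0) hx0⟩
  set q := Fintype.card F with hqdef
  have hq : 1 < q := Fintype.one_lt_card
  set m := ℓ + k with hm
  -- the number of row vectors orthogonal to a fixed nonzero vector
  have hdot : ∀ x : Fin t → F, x ≠ 0 →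
      Fintype.card {a : Fin t → F // a ⬝ᵥ x = 0} = q ^ (t - 1) := by
    intro x hx
    obtain ⟨j, hj⟩ : ∃ j, x j ≠ 0 := by
      by_contra hcon; push_neg at hcon; exact hx (funext hcon)
    let f : (Fin t → F) →ₗ[F] F :=
      { toFun := fun a => a ⬝ᵥ x
        map_add' := fun a b => add_dotProduct a b x
        map_smul' := fun c a => smul_dotProduct c a x }
    have hcongr : Fintype.card {a : Fin t → F // a ⬝ᵥ x = 0}
        = Fintype.card (LinearMap.ker f) :=
      Fintype.card_congr (Equiv.subtypeEquivRight fun a => (LinearMap.mem_ker (f := f)).symm)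
    have hsurj : Function.Surjective f := by
      intro c
      refine ⟨Pi.single j ((x j)⁻¹ * c), ?_⟩
      show Pi.single j ((x j)⁻¹ * c) ⬝ᵥ x = c
      rw [single_dotProduct]
      field_simp
    have hrange : LinearMap.range f = ⊤ := LinearMap.range_eq_top.mpr hsurj
    have hrank : finrank F (LinearMap.range f) + finrank F (LinearMap.ker f)
        = finrank F (Fin t → F) := f.finrank_range_add_finrank_ker
    rw [hrange, finrank_top, Module.finrank_self, Module.finrank_fin_fun] at hrank
    have hker : finrank F (LinearMap.ker f) = t - 1 := by omega
    rw [hcongr, card_eq_pow_finrank (K := F) (V := LinearMap.ker f), hker]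
  -- the number of matrices killing a fixed nonzero vector
  have hkill : ∀ x : Fin t → F, x ≠ 0 →
      (Finset.univ.filter fun A : Matrix (Fin m) (Fin t) F => A *ᵥ x = 0).card
        = (q ^ (t - 1)) ^ m := by
    intro x hx
    rw [← Fintype.card_subtype]
    have e : {A : Matrix (Fin m) (Fin t) F // A *ᵥ x = 0}
        ≃ (Fin m → {a : Fin t → F // a ⬝ᵥ x = 0}) := by
      refine (Equiv.subtypeEquivRight fun A => ?_).trans
        (Equiv.subtypePiEquivPi (p := fun (_ : Fin m) (a : Fin t → F) => a ⬝ᵥ x = 0))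
      constructor
      · intro hh i; exact congrFun hh i
      · intro hh; funext i; exact hh i
    rw [Fintype.card_congr e, Fintype.card_fun, hdot x hx, Fintype.card_fin]
  set Bad : Finset (Matrix (Fin m) (Fin t) F) :=
    Finset.univ.filter (fun A => ∃ v, ∃ x ∈ W v, x ≠ 0 ∧ A *ᵥ x = 0) with hBad
  have hsub : Bad ⊆ Finset.univ.biUnion (fun v : V =>
      (Finset.univ.filter fun x : Fin t → F => x ∈ W v ∧ x ≠ 0).biUnion
        (fun x => Finset.univ.filter fun A : Matrix (Fin m) (Fin t) F => A *ᵥ x = 0)) := by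
    intro A hA
    rw [hBad, Finset.mem_filter] at hA
    obtain ⟨-, v, x, hxW, hx0, hAx⟩ := hA
    simp only [Finset.mem_biUnion, Finset.mem_filter, Finset.mem_univ, true_and]
    exact ⟨v, x, ⟨hxW, hx0⟩, hAx⟩
  have hxcount : ∀ v : V,
      (Finset.univ.filter fun x : Fin t → F => x ∈ W v ∧ x ≠ 0).card ≤ q ^ ℓ - 1 := by
    intro v
    have hsub2 : (Finset.univ.filter fun x : Fin t → F => x ∈ W v ∧ x ≠ 0)
        ⊆ (Finset.univ.filter fun x : Fin t → F => x ∈ W v).erase 0 := by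
      intro x hx
      rw [Finset.mem_filter] at hx
      exact Finset.mem_erase.mpr ⟨hx.2.2, Finset.mem_filter.mpr ⟨Finset.mem_univ _, hx.2.1⟩⟩
    have h0 : (0 : Fin t → F) ∈ Finset.univ.filter fun x : Fin t → F => x ∈ W v :=
      Finset.mem_filter.mpr ⟨Finset.mem_univ _, (W v).zero_mem⟩
    have hcardW : (Finset.univ.filter fun x : Fin t → F => x ∈ W v).card
        = q ^ finrank F (W v) := by
      rw [← Fintype.card_subtype]
      exact (card_eq_pow_finrank (K := F) (V := W v))
    have hpow : q ^ finrank F (W v) ≤ q ^ ℓ :=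
      Nat.pow_le_pow_right (le_of_lt hq) (hW v)
    calc (Finset.univ.filter fun x : Fin t → F => x ∈ W v ∧ x ≠ 0).card
        ≤ ((Finset.univ.filter fun x : Fin t → F => x ∈ W v).erase 0).card :=
          Finset.card_le_card hsub2
      _ = q ^ finrank F (W v) - 1 := by rw [Finset.card_erase_of_mem h0, hcardW]
      _ ≤ q ^ ℓ - 1 := by omega
  have hbound : Bad.card ≤ Fintype.card V * ((q ^ ℓ - 1) * (q ^ (t - 1)) ^ m) := by
    refine (Finset.card_le_card hsub).trans ?_
    refine (Finset.card_biUnion_le).trans ?_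
    calc ∑ v : V, ((Finset.univ.filter fun x : Fin t → F => x ∈ W v ∧ x ≠ 0).biUnion
          (fun x => Finset.univ.filter
            fun A : Matrix (Fin m) (Fin t) F => A *ᵥ x = 0)).card
        ≤ ∑ v : V, (q ^ ℓ - 1) * (q ^ (t - 1)) ^ m := by
          refine Finset.sum_le_sum fun v _ => ?_
          refine (Finset.card_biUnion_le).trans ?_
          have heach : ∀ x ∈ (Finset.univ.filter fun x : Fin t → F => x ∈ W v ∧ x ≠ 0),
              (Finset.univ.filter
                fun A : Matrix (Fin m) (Fin t) F => A *ᵥ x = 0).card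
                = (q ^ (t - 1)) ^ m := by
            intro x hx
            exact hkill x (Finset.mem_filter.mp hx).2.2
          rw [Finset.sum_congr rfl heach, Finset.sum_const, smul_eq_mul]
          exact Nat.mul_le_mul_right _ (hxcount v)
      _ = Fintype.card V * ((q ^ ℓ - 1) * (q ^ (t - 1)) ^ m) := by
          rw [Finset.sum_const, Finset.card_univ, smul_eq_mul]
  have hQpos : 0 < (q ^ (t - 1)) ^ m := by positivity
  have hqpos : 0 < q := by omega
  have hstrict : Fintype.card V * ((q ^ ℓ - 1) * (q ^ (t - 1)) ^ m)
      < q ^ m * (q ^ (t - 1)) ^ m := by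
    have h1 : Fintype.card V * (q ^ ℓ - 1) < q ^ m := by
      have hkpos : 0 < q ^ k := Nat.pow_pos hqpos
      have hlpos : 0 < q ^ ℓ := Nat.pow_pos hqpos
      have h2 : Fintype.card V * (q ^ ℓ - 1) ≤ q ^ k * (q ^ ℓ - 1) :=
        Nat.mul_le_mul_right _ hcard
      have h3 : q ^ k * (q ^ ℓ - 1) < q ^ k * q ^ ℓ :=
        mul_lt_mul_of_pos_left (by omega) hkpos
      have h4 : q ^ k * q ^ ℓ = q ^ m := by rw [hm, ← pow_add, Nat.add_comm]
      omega
    calc Fintype.card V * ((q ^ ℓ - 1) * (q ^ (t - 1)) ^ m)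
        = (Fintype.card V * (q ^ ℓ - 1)) * (q ^ (t - 1)) ^ m := by ring
      _ < q ^ m * (q ^ (t - 1)) ^ m := mul_lt_mul_of_pos_right h1 hQpos
  have hcardM : Fintype.card (Matrix (Fin m) (Fin t) F) = q ^ m * (q ^ (t - 1)) ^ m := by
    have h1 : Fintype.card (Matrix (Fin m) (Fin t) F)
        = Fintype.card (Fin m → Fin t → F) :=
      Fintype.card_congr (Matrix.of).symm
    have h2 : q * q ^ (t - 1) = q ^ t := by
      rw [← pow_succ']
      congr 1
      omega
    rw [h1, Fintype.card_fun, Fintype.card_fun, Fintype.card_fin, Fintype.card_fin,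
      ← Nat.mul_pow, h2]
  have hlt : Bad.card < Fintype.card (Matrix (Fin m) (Fin t) F) := by
    rw [hcardM]; exact lt_of_le_of_lt hbound hstrict
  obtain ⟨A, hA⟩ : ∃ A : Matrix (Fin m) (Fin t) F, A ∉ Bad := by
    by_contra hcon
    push_neg at hcon
    have hsub3 : (Finset.univ : Finset (Matrix (Fin m) (Fin t) F)) ⊆ Bad :=
      fun A _ => hcon A
    have := Finset.card_le_card hsub3
    rw [Finset.card_univ] at this
    omega
  refine ⟨A, fun v x hxW hx0 hAx => hA ?_⟩
  rw [hBad, Finset.mem_filter]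
  exact ⟨Finset.mem_univ _, v, x, hxW, hx0, hAx⟩

/-- The defining set of the local orthogonality dimension is nonempty and attained. -/
private lemma locOrthDim_attained {V : Type*} [Fintype V] (G : SimpleGraph V) (F : Type*)
    [Field F] :
    ∃ t : ℕ, ∃ u : V → Fin t → F, IsOrthRep G u ∧ RepLocalityLE G u (locOrthDim G F) := by
  classical
  have hne : {ℓ | ∃ t : ℕ, ∃ u : V → Fin t → F, IsOrthRep G u ∧ RepLocalityLE G u ℓ}.Nonempty := by
    refine ⟨Fintype.card V, Fintype.card V,
      fun v => Pi.single (Fintype.equivFin V v) 1, ⟨?_, ?_⟩, ?_⟩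
    · intro v
      rw [single_dotProduct]
      simp
    · intro v w hvw
      rw [single_dotProduct]
      have hne' : Fintype.equivFin V w ≠ Fintype.equivFin V v :=
        fun hh => hvw.ne' ((Fintype.equivFin V).injective hh)
      simp [Pi.single_apply, hne']
    · intro v
      refine le_trans (Submodule.finrank_le _) ?_
      simp
  exact Nat.sInf_mem hne

/-- An independent representation of the complement in dimension `m` bounds the minrank. -/
private lemma minrank_le_of_indrep {V : Type*} [Fintype V] {m : ℕ}
    (G : SimpleGraph V) (u : V → Fin m → F) (h : IsIndRep Gᶜ u) :
    minrank F G ≤ m := by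
  classical
  have hf : ∀ v : V, ∃ f : Module.Dual F (Fin m → F),
      f (u v) ≠ 0 ∧ (Submodule.span F (u '' Gᶜ.neighborSet v)).map f = ⊥ :=
    fun v => Submodule.exists_dual_map_eq_bot_of_notMem (h v) inferInstance
  choose f hf1 hf2 using hf
  set M : Matrix V V F := Matrix.of fun v w => f v (u w) with hM
  have hrep : MatRepresents G M := by
    constructor
    · exact fun i => hf1 i
    · intro i j hij hnadj
      have hadj : Gᶜ.Adj i j := by rw [SimpleGraph.compl_adj]; exact ⟨hij, hnadj⟩
      have hmem : u j ∈ Submodule.span F (u '' Gᶜ.neighborSet i) :=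
        Submodule.subset_span ⟨j, hadj, rfl⟩
      have hmem2 : f i (u j) ∈ (Submodule.span F (u '' Gᶜ.neighborSet i)).map (f i) :=
        Submodule.mem_map_of_mem hmem
      rw [hf2 i] at hmem2
      exact (Submodule.mem_bot F).mp hmem2
  have hrank : M.rank ≤ m := by
    set B : Matrix V (Fin m) F := Matrix.of fun v j => f v (fun i => if j = i then 1 else 0)
      with hB
    set C : Matrix (Fin m) V F := Matrix.of fun j w => u w j with hC
    have hMBC : M = B * C := by
      ext v w
      rw [Matrix.mul_apply]
      show f v (u w) = _
      rw [LinearMap.pi_apply_eq_sum_univ (f v) (u w)]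
      refine Finset.sum_congr rfl fun j _ => ?_
      show u w j • f v (fun i => if j = i then 1 else 0) = B v j * C j w
      rw [smul_eq_mul, mul_comm]
      rfl
    calc M.rank = (B * C).rank := by rw [hMBC]
      _ ≤ C.rank := Matrix.rank_mul_le_right B C
      _ ≤ Fintype.card (Fin m) := Matrix.rank_le_card_height C
      _ = m := Fintype.card_fin m
  exact le_trans (Nat.sInf_le ⟨M, hrep, rfl⟩) hrank

end Helpers

theorem minrank_le_locOrthDim_compl_add_clog {V : Type*} [Fintype V] (G : SimpleGraph V)
    (F : Type*) [Field F] [Fintype F] :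
    minrank F G ≤ locOrthDim Gᶜ F + Nat.clog (Fintype.card F) (Fintype.card V) := by
  classical
  obtain ⟨t, u, hrep, hloc⟩ := locOrthDim_attained Gᶜ F
  have hq : 1 < Fintype.card F := Fintype.one_lt_card
  obtain ⟨A, hA⟩ := exists_good_map (F := F) (k := Nat.clog (Fintype.card F) (Fintype.card V))
    (Nat.le_pow_clog hq (Fintype.card V))
    (fun v => Submodule.span F (u '' insert v (Gᶜ.neighborSet v))) hloc
  refine minrank_le_of_indrep G (fun v => A *ᵥ u v) ?_
  intro v hmem
  set N := Gᶜ.neighborSet v with hN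
  have himg : (fun w => A *ᵥ u w) '' N = A.mulVecLin '' (u '' N) := by
    rw [Set.image_image]
    rfl
  rw [himg, ← Submodule.map_span] at hmem
  obtain ⟨y, hy, hyx⟩ := hmem
  have huvW : u v ∈ Submodule.span F (u '' insert v N) :=
    Submodule.subset_span ⟨v, Set.mem_insert v N, rfl⟩
  have hyW : y ∈ Submodule.span F (u '' insert v N) :=
    Submodule.span_mono (Set.image_mono (f := u) (Set.subset_insert v N)) hy
  have hdiff : y - u v ∈ Submodule.span F (u '' insert v N) := sub_mem hyW huvW
  have hAdiff : A *ᵥ (y - u v) = 0 := by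
    have h2 : A.mulVecLin (y - u v) = 0 := by
      rw [map_sub, hyx]
      simp [Matrix.mulVecLin_apply]
    simpa [Matrix.mulVecLin_apply] using h2
  have hy0 : y - u v = 0 := by
    by_contra h0
    exact hA v (y - u v) hdiff h0 hAdiff
  have huv : u v ∈ Submodule.span F (u '' N) := by
    have hyuv : y = u v := by rwa [sub_eq_zero] at hy0
    rwa [hyuv] at hy
  let g : (Fin t → F) →ₗ[F] F :=
    { toFun := fun z => u v ⬝ᵥ z
      map_add' := fun a b => by simp [dotProduct_add]
      map_smul' := fun c a => by simp [dotProduct_smul] }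
  have hg : Submodule.span F (u '' N) ≤ LinearMap.ker g := by
    rw [Submodule.span_le]
    rintro _ ⟨w, hw, rfl⟩
    exact LinearMap.mem_ker.mpr (hrep.2 hw)
  exact hrep.1 v (LinearMap.mem_ker.mp (hg huv))
end

section
/- For every graph G on n vertices, minrank over F_2 of G is at most χ_l(complement of G) + 2·log_2 n (and in fact at most χ_l(complement of G) + ⌈log_2 n⌉). -/
open Matrix

set_option maxHeartbeats 1600000

lemma sum_dotProduct' {ι R : Type*} [CommRing R] {t : ℕ} (s : Finset ι)
    (f : ι → (Fin t → R)) (v : Fin t → R) :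
    (∑ i ∈ s, f i) ⬝ᵥ v = ∑ i ∈ s, f i ⬝ᵥ v := by
  simp only [dotProduct, Finset.sum_apply, Finset.sum_mul]
  rw [Finset.sum_comm]


/-- For nonzero `g`, exactly half of the vectors are orthogonal to it. -/
lemma card_dot_eq_zero {t : ℕ} (g : Fin t → ZMod 2) (hg : g ≠ 0) :
    (Finset.univ.filter (fun y : Fin t → ZMod 2 => g ⬝ᵥ y = 0)).card = 2 ^ (t - 1) := by
  classical
  obtain ⟨j, hj⟩ : ∃ j, g j ≠ 0 := by
    by_contra h
    push_neg at h
    exact hg (funext h)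
  have hgj : g j = 1 := by
    have : ∀ a : ZMod 2, a ≠ 0 → a = 1 := by decide
    exact this _ hj
  have ht : 1 ≤ t := j.pos
  have key : ∀ y : Fin t → ZMod 2, g ⬝ᵥ (y + Pi.single j 1) = g ⬝ᵥ y + 1 := by
    intro y
    rw [dotProduct_add, dotProduct_single, hgj, one_mul]
  have hcards : (Finset.univ.filter (fun y : Fin t → ZMod 2 => g ⬝ᵥ y = 0)).card
      = (Finset.univ.filter (fun y : Fin t → ZMod 2 => ¬ g ⬝ᵥ y = 0)).card := by
    apply Finset.card_bij' (fun y _ => y + Pi.single j 1) (fun y _ => y + Pi.single j 1)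
    · intro y _
      have h2 : ∀ a : ZMod 2, a + 1 + 1 = a := by decide
      funext k
      simp only [Pi.add_apply, Pi.single_apply]
      by_cases hk : k = j <;> simp [hk, h2]
    · intro y _
      have h2 : ∀ a : ZMod 2, a + 1 + 1 = a := by decide
      funext k
      simp only [Pi.add_apply, Pi.single_apply]
      by_cases hk : k = j <;> simp [hk, h2]
    · intro y hy
      simp only [Finset.mem_filter, Finset.mem_univ, true_and] at hy ⊢
      rw [key, hy]
      decide
    · intro y hy
      simp only [Finset.mem_filter, Finset.mem_univ, true_and] at hy ⊢
      rw [key]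
      have h2 : ∀ a : ZMod 2, ¬ a = 0 → a + 1 = 0 := by decide
      exact h2 _ hy
  have htotal := Finset.card_filter_add_card_filter_not
    (s := (Finset.univ : Finset (Fin t → ZMod 2))) (p := fun y => g ⬝ᵥ y = 0)
  rw [Finset.card_univ, Fintype.card_fun] at htotal
  have h2 : (Fintype.card (ZMod 2)) ^ Fintype.card (Fin t) = 2 ^ t := by
    simp [ZMod.card]
  rw [h2] at htotal
  rw [← hcards] at htotal
  have : 2 ^ t = 2 * 2 ^ (t - 1) := by
    rw [← pow_succ']
    congr 1
    omega
  omega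

lemma exists_good_tuple {t m : ℕ} (B : Finset (Fin t → ZMod 2)) (h0 : (0 : Fin t → ZMod 2) ∉ B)
    (hcard : B.card < 2 ^ m) :
    ∃ x : Fin m → Fin t → ZMod 2, ∀ g ∈ B, ∃ i, g ⬝ᵥ x i ≠ 0 := by
  rcases B.eq_empty_or_nonempty with rfl | hBne
  · exact ⟨0, by simp⟩
  obtain ⟨g0, hg0⟩ := hBne
  have ht : 1 ≤ t := by
    rcases Nat.eq_zero_or_pos t with rfl | h
    · exact absurd hg0 (by rwa [show g0 = 0 from funext fun i => i.elim0])
    · exact h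
  set Bad : Finset (Fin m → Fin t → ZMod 2) :=
    Finset.univ.filter (fun x => ∃ g ∈ B, ∀ i, g ⬝ᵥ x i = 0) with hBad
  have hsub : Bad ⊆ B.biUnion (fun g => Finset.univ.filter (fun x => ∀ i, g ⬝ᵥ x i = 0)) := by
    intro x hx
    simp only [hBad, Finset.mem_filter, Finset.mem_univ, true_and] at hx
    obtain ⟨g, hgB, hgx⟩ := hx
    exact Finset.mem_biUnion.mpr ⟨g, hgB, by simp [hgx]⟩
  have hone : ∀ g ∈ B, (Finset.univ.filter
      (fun x : Fin m → Fin t → ZMod 2 => ∀ i, g ⬝ᵥ x i = 0)).card = (2 ^ (t - 1)) ^ m := by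
    intro g hg
    have hgne : g ≠ 0 := fun h => h0 (h ▸ hg)
    have hpi : Finset.univ.filter (fun x : Fin m → Fin t → ZMod 2 => ∀ i, g ⬝ᵥ x i = 0)
        = Fintype.piFinset (fun _ : Fin m => Finset.univ.filter (fun y => g ⬝ᵥ y = 0)) := by
      ext x
      simp [Fintype.mem_piFinset]
    rw [hpi, Fintype.card_piFinset]
    simp [card_dot_eq_zero g hgne]
  have h1 : Bad.card ≤ B.card * (2 ^ (t - 1)) ^ m := by
    refine (Finset.card_le_card hsub).trans ?_
    refine (Finset.card_biUnion_le).trans (le_of_eq ?_)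
    rw [Finset.sum_congr rfl hone, Finset.sum_const, smul_eq_mul]
  have h2 : Fintype.card (Fin m → Fin t → ZMod 2) = 2 ^ m * (2 ^ (t - 1)) ^ m := by
    rw [Fintype.card_fun, Fintype.card_fun, ZMod.card, Fintype.card_fin, Fintype.card_fin,
      ← mul_pow]
    congr 1
    rw [← pow_succ']
    congr 1
    omega
  have hBadcard : Bad.card < Fintype.card (Fin m → Fin t → ZMod 2) := by
    rw [h2]
    refine h1.trans_lt ?_
    have : (0:ℕ) < (2 ^ (t - 1)) ^ m := by positivity
    exact Nat.mul_lt_mul_of_lt_of_le hcard (le_refl _) this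
  obtain ⟨x, hx⟩ : ∃ x : Fin m → Fin t → ZMod 2, x ∉ Bad := by
    by_contra h
    push_neg at h
    rw [Finset.eq_univ_iff_forall.mpr h, Finset.card_univ] at hBadcard
    exact lt_irrefl _ hBadcard
  refine ⟨x, fun g hg => ?_⟩
  simp only [hBad, Finset.mem_filter, Finset.mem_univ, true_and, not_exists] at hx
  by_contra h
  push_neg at h
  exact hx g ⟨hg, h⟩


lemma exists_bad_witness {V : Type*} [Fintype V] {t m : ℕ} (u : V → Fin t → ZMod 2)
    (N : Set V) (v : V) (hvN : v ∈ N) (huv : u v ⬝ᵥ u v ≠ 0)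
    (x : Fin m → Fin t → ZMod 2)
    (hbad : ¬ ∃ z : Fin m → ZMod 2, ∀ w ∈ N, (∑ i, z i • x i) ⬝ᵥ u w = u v ⬝ᵥ u w) :
    ∃ g ∈ Submodule.span (ZMod 2) (u '' N), g ⬝ᵥ u v = 1 ∧ ∀ i, g ⬝ᵥ x i = 0 := by
  classical
  set ψ : (Fin t → ZMod 2) →ₗ[ZMod 2] (↥N → ZMod 2) :=
    { toFun := fun y w => y ⬝ᵥ u ↑w
      map_add' := by intro y y'; funext w; simp [add_dotProduct]
      map_smul' := by intro c y; funext w; simp [smul_dotProduct] } with hψ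
  set p : Submodule (ZMod 2) (↥N → ZMod 2) :=
    Submodule.span (ZMod 2) (Set.range (fun i => ψ (x i))) with hp
  have hτ : ψ (u v) ∉ p := by
    intro hmem
    apply hbad
    rw [hp, Submodule.mem_span_range_iff_exists_fun] at hmem
    obtain ⟨z, hz⟩ := hmem
    refine ⟨z, fun w hw => ?_⟩
    have h1 : ψ (∑ i, z i • x i) = ψ (u v) := by
      rw [map_sum]
      simp_rw [_root_.map_smul]
      exact hz
    exact congrFun h1 ⟨w, hw⟩
  obtain ⟨f, hf0, hfbot⟩ := Submodule.exists_dual_map_eq_bot_of_notMem hτ inferInstance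
  have hfp : ∀ q ∈ p, f q = 0 := by
    intro q hq
    have : f q ∈ p.map f := Submodule.mem_map_of_mem hq
    rw [hfbot] at this
    exact (Submodule.mem_bot (ZMod 2)).mp this
  set g : Fin t → ZMod 2 := ∑ w : ↥N, f (Pi.single w 1) • u ↑w with hg
  have key : ∀ y : Fin t → ZMod 2, g ⬝ᵥ y = f (ψ y) := by
    intro y
    have hexp : ψ y = ∑ w : ↥N, (ψ y w) • Pi.single w (1 : ZMod 2) := by
      funext w'
      simp only [Finset.sum_apply, Pi.smul_apply, Pi.single_apply, smul_eq_mul, mul_ite,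
        mul_one, mul_zero]
      rw [Finset.sum_ite_eq]
      simp
    calc g ⬝ᵥ y = ∑ w : ↥N, (f (Pi.single w 1) • u ↑w) ⬝ᵥ y := by
          rw [hg, sum_dotProduct']
      _ = ∑ w : ↥N, (ψ y w) * f (Pi.single w 1) := by
          apply Finset.sum_congr rfl
          intro w _
          rw [smul_dotProduct, smul_eq_mul, dotProduct_comm]
          simp only [hψ, LinearMap.coe_mk, AddHom.coe_mk]
          ring
      _ = f (∑ w : ↥N, (ψ y w) • Pi.single w (1 : ZMod 2)) := by
          rw [map_sum]
          apply Finset.sum_congr rfl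
          intro w _
          rw [_root_.map_smul, smul_eq_mul]
      _ = f (ψ y) := by rw [← hexp]
  have hg1 : g ⬝ᵥ u v = 1 := by
    rw [key]
    have : ∀ a : ZMod 2, a ≠ 0 → a = 1 := by decide
    exact this _ hf0
  refine ⟨g, ?_, hg1, ?_⟩
  · rw [hg]
    apply Submodule.sum_smul_mem
    intro w _
    exact Submodule.subset_span ⟨↑w, w.2, rfl⟩
  · intro i
    rw [key]
    apply hfp
    exact Submodule.subset_span ⟨i, rfl⟩


open scoped Classical in
lemma card_witness_le {t ℓ : ℕ} (W : Submodule (ZMod 2) (Fin t → ZMod 2))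
    (hW : Module.finrank (ZMod 2) W ≤ ℓ) (a : Fin t → ZMod 2) :
    (Finset.univ.filter (fun g : Fin t → ZMod 2 => g ∈ W ∧ g ⬝ᵥ a = 1)).card ≤ 2 ^ ℓ - 1 := by
  classical
  have hsub : Finset.univ.filter (fun g : Fin t → ZMod 2 => g ∈ W ∧ g ⬝ᵥ a = 1)
      ⊆ (Finset.univ.filter (fun g : Fin t → ZMod 2 => g ∈ W)).erase 0 := by
    intro g hg
    simp only [Finset.mem_filter, Finset.mem_univ, true_and] at hg
    refine Finset.mem_erase.mpr ⟨?_, by simp [hg.1]⟩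
    rintro rfl
    rw [zero_dotProduct] at hg
    exact zero_ne_one hg.2
  refine (Finset.card_le_card hsub).trans ?_
  have h0W : (0 : Fin t → ZMod 2) ∈ Finset.univ.filter (fun g : Fin t → ZMod 2 => g ∈ W) := by
    simp [Submodule.zero_mem]
  rw [Finset.card_erase_of_mem h0W]
  have hcardW : (Finset.univ.filter (fun g : Fin t → ZMod 2 => g ∈ W)).card
      = 2 ^ (Module.finrank (ZMod 2) W) := by
    rw [← Fintype.card_subtype]
    have h := Module.card_eq_pow_finrank (K := ZMod 2) (V := ↥W)
    rwa [ZMod.card] at h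
  rw [hcardW]
  exact Nat.sub_le_sub_right (Nat.pow_le_pow_right (by norm_num) hW) 1

lemma minrank_le_of_rep {V : Type*} [Fintype V] (G : SimpleGraph V) {t ℓ : ℕ}
    (u : V → Fin t → ZMod 2) (hrep : IsOrthRep Gᶜ u) (hloc : RepLocalityLE Gᶜ u ℓ) :
    minrank (ZMod 2) G ≤ ℓ + Nat.clog 2 (Fintype.card V) := by
  classical
  set r := Nat.clog 2 (Fintype.card V) with hr
  set m := ℓ + r with hm
  set N : V → Set V := fun v => insert v (Gᶜ.neighborSet v) with hN
  set W : V → Submodule (ZMod 2) (Fin t → ZMod 2) :=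
    fun v => Submodule.span (ZMod 2) (u '' N v) with hW
  set B : Finset (Fin t → ZMod 2) :=
    Finset.univ.filter (fun g => ∃ v, g ∈ W v ∧ g ⬝ᵥ u v = 1) with hB
  have h0B : (0 : Fin t → ZMod 2) ∉ B := by
    simp only [hB, Finset.mem_filter, Finset.mem_univ, true_and, not_exists]
    intro v hv
    rw [zero_dotProduct] at hv
    exact zero_ne_one hv.2
  have hsub : B ⊆ Finset.univ.biUnion
      (fun v : V => Finset.univ.filter (fun g : Fin t → ZMod 2 => g ∈ W v ∧ g ⬝ᵥ u v = 1)) := by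
    intro g hg
    simp only [hB, Finset.mem_filter, Finset.mem_univ, true_and] at hg
    obtain ⟨v, hv⟩ := hg
    exact Finset.mem_biUnion.mpr ⟨v, Finset.mem_univ v, by simp [hv]⟩
  have hBcard : B.card < 2 ^ m := by
    refine (Finset.card_le_card hsub).trans_lt ?_
    refine (Finset.card_biUnion_le).trans_lt ?_
    have hstep : ∀ v ∈ (Finset.univ : Finset V),
        (Finset.univ.filter (fun g : Fin t → ZMod 2 => g ∈ W v ∧ g ⬝ᵥ u v = 1)).card
        ≤ 2 ^ ℓ - 1 := fun v _ => card_witness_le (W v) (hloc v) (u v)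
    refine (Finset.sum_le_sum hstep).trans_lt ?_
    rw [Finset.sum_const, smul_eq_mul, Finset.card_univ]
    have hn : Fintype.card V ≤ 2 ^ r := Nat.le_pow_clog one_lt_two _
    have h2l : (0:ℕ) < 2 ^ ℓ := by positivity
    have h2r : (0:ℕ) < 2 ^ r := by positivity
    calc Fintype.card V * (2 ^ ℓ - 1) ≤ 2 ^ r * (2 ^ ℓ - 1) := Nat.mul_le_mul_right _ hn
      _ < 2 ^ r * 2 ^ ℓ := mul_lt_mul_of_pos_left (Nat.sub_lt h2l one_pos) h2r
      _ = 2 ^ m := by rw [← pow_add, Nat.add_comm, hm]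
  obtain ⟨x, hx⟩ := exists_good_tuple B h0B hBcard
  have hgood : ∀ v, ∃ z : Fin m → ZMod 2,
      ∀ w ∈ N v, (∑ i, z i • x i) ⬝ᵥ u w = u v ⬝ᵥ u w := by
    intro v
    by_contra hbad
    obtain ⟨g, hgW, hg1, hg0⟩ :=
      exists_bad_witness u (N v) v (Set.mem_insert v _) (hrep.1 v) x hbad
    have hgB : g ∈ B := by
      simp only [hB, Finset.mem_filter, Finset.mem_univ, true_and]
      exact ⟨v, hgW, hg1⟩
    obtain ⟨i, hi⟩ := hx g hgB
    exact hi (hg0 i)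
  choose z hz using hgood
  set Z : Matrix V (Fin m) (ZMod 2) := fun v i => z v i with hZ
  set Y : Matrix (Fin m) V (ZMod 2) := fun i w => x i ⬝ᵥ u w with hY
  have hM : ∀ v w, (Z * Y) v w = (∑ i, z v i • x i) ⬝ᵥ u w := by
    intro v w
    rw [Matrix.mul_apply, sum_dotProduct']
    refine Finset.sum_congr rfl fun i _ => ?_
    rw [smul_dotProduct, smul_eq_mul]
  have hrepM : MatRepresents G (Z * Y) := by
    constructor
    · intro v
      have hd : (Z * Y) v v = u v ⬝ᵥ u v := by
        rw [hM v v, hz v v (Set.mem_insert v _)]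
      rw [hd]
      exact hrep.1 v
    · intro v w hne hnadj
      have hwN : w ∈ N v := Set.mem_insert_of_mem _ (by
        rw [SimpleGraph.mem_neighborSet, SimpleGraph.compl_adj]
        exact ⟨hne, hnadj⟩)
      rw [hM v w, hz v w hwN]
      exact hrep.2 ((SimpleGraph.compl_adj G v w).mpr ⟨hne, hnadj⟩)
  have hmem : (Z * Y).rank ∈ {r | ∃ M : Matrix V V (ZMod 2), MatRepresents G M ∧ M.rank = r} :=
    ⟨Z * Y, hrepM, rfl⟩
  refine (Nat.sInf_le hmem).trans ?_
  refine (Matrix.rank_mul_le_right Z Y).trans ?_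
  refine (Matrix.rank_le_card_height Y).trans ?_
  simp

lemma rep_of_coloring {V : Type*} [Fintype V] (H : SimpleGraph V) {ℓ : ℕ} (c : V → ℕ)
    (hc : IsProperColoring H c) (hloc : ColoringLocalityLE H c ℓ) :
    ∃ t : ℕ, ∃ u : V → Fin t → ZMod 2, IsOrthRep H u ∧ RepLocalityLE H u ℓ := by
  classical
  set cs : Finset ℕ := Finset.image c Finset.univ with hcs
  set e := Fintype.equivFin ↥cs with he
  have hmem : ∀ v, c v ∈ cs := fun v => Finset.mem_image_of_mem c (Finset.mem_univ v)
  set h : ℕ → (Fin (Fintype.card ↥cs) → ZMod 2) := fun j =>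
    if hj : j ∈ cs then Pi.single (e ⟨j, hj⟩) 1 else 0 with hh
  set u : V → Fin (Fintype.card ↥cs) → ZMod 2 := fun v => h (c v) with hu
  have huv : ∀ v, u v = Pi.single (e ⟨c v, hmem v⟩) 1 := by
    intro v
    rw [hu, hh]
    exact dif_pos (hmem v)
  have hdot : ∀ v w, u v ⬝ᵥ u w
      = if e ⟨c v, hmem v⟩ = e ⟨c w, hmem w⟩ then 1 else 0 := by
    intro v w
    rw [huv v, huv w, single_dotProduct, one_mul, Pi.single_apply]
  refine ⟨Fintype.card ↥cs, u, ⟨?_, ?_⟩, ?_⟩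
  · intro v
    rw [hdot, if_pos rfl]
    exact one_ne_zero
  · intro v w hadj
    rw [hdot, if_neg]
    intro heq
    exact hc hadj (Subtype.mk_eq_mk.mp (e.injective heq))
  · intro v
    have himg : u '' (insert v (H.neighborSet v))
        = h '' (c '' insert v (H.neighborSet v)) := by
      rw [hu, ← Set.image_image]
    rw [himg]
    set S := h '' (c '' insert v (H.neighborSet v)) with hS
    have hfin : S.Finite := Set.toFinite _
    haveI := hfin.fintype
    refine le_trans (finrank_span_le_card (R := ZMod 2) S) ?_
    rw [← Set.ncard_eq_toFinset_card']
    exact le_trans (Set.ncard_image_le (Set.toFinite _)) (hloc v)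

lemma clog_le_two_logb (n : ℕ) : (Nat.clog 2 n : ℝ) ≤ 2 * Real.logb 2 n := by
  rcases Nat.lt_or_ge n 2 with h1 | h1
  · interval_cases n
    · simp
    · simp [Nat.clog_one_right]
  · set k := Nat.clog 2 n with hk
    have hk1 : 1 ≤ k := Nat.clog_pos one_lt_two h1
    have hlt : 2 ^ (k - 1) < n := Nat.pow_pred_clog_lt_self one_lt_two h1
    have hnpos : (0:ℝ) < (n:ℝ) := by
      have : 0 < n := by omega
      exact_mod_cast this
    have hlogn1 : (1:ℝ) ≤ Real.logb 2 n := by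
      have h22 : Real.logb 2 2 = 1 := Real.logb_self_eq_one (by norm_num : (1:ℝ) < 2)
      rw [← h22]
      exact (Real.logb_le_logb one_lt_two (by norm_num) hnpos).mpr (by exact_mod_cast h1)
    have h2k : ((k - 1 : ℕ) : ℝ) ≤ Real.logb 2 n := by
      have hpow : ((2:ℝ) ^ (k - 1 : ℕ)) ≤ (n:ℝ) := by exact_mod_cast hlt.le
      have hlogpow : Real.logb 2 ((2:ℝ) ^ (k - 1 : ℕ)) = ((k - 1 : ℕ) : ℝ) := by
        rw [Real.logb_pow, Real.logb_self_eq_one (by norm_num : (1:ℝ) < 2), mul_one]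
      rw [← hlogpow]
      exact (Real.logb_le_logb one_lt_two (by positivity) hnpos).mpr hpow
    have hcast : ((k - 1 : ℕ) : ℝ) = (k : ℝ) - 1 := by
      rw [Nat.cast_sub hk1, Nat.cast_one]
    rw [hcast] at h2k
    linarith


theorem minrank_F2_le_locChrom_compl_add_log {V : Type*} [Fintype V] (G : SimpleGraph V) :
    (minrank (ZMod 2) G : ℝ) ≤ locChrom Gᶜ + 2 * Real.logb 2 (Fintype.card V) ∧
    minrank (ZMod 2) G ≤ locChrom Gᶜ + Nat.clog 2 (Fintype.card V) := by
  classical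
  have hne : {ℓ | ∃ c : V → ℕ, IsProperColoring Gᶜ c ∧ ColoringLocalityLE Gᶜ c ℓ}.Nonempty := by
    refine ⟨Fintype.card V, fun v => ((Fintype.equivFin V) v : ℕ), ?_, ?_⟩
    · intro v w hadj hcvw
      exact hadj.ne ((Fintype.equivFin V).injective (Fin.val_injective hcvw))
    · intro v
      refine le_trans (Set.ncard_image_le (Set.toFinite _)) ?_
      refine le_trans (Set.ncard_le_ncard (Set.subset_univ _) Set.finite_univ) ?_
      rw [Set.ncard_univ, Nat.card_eq_fintype_card]
  obtain ⟨c, hc, hloc⟩ := Nat.sInf_mem hne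
  obtain ⟨t, u, hrep, hrloc⟩ := rep_of_coloring Gᶜ c hc hloc
  have h2 : minrank (ZMod 2) G ≤ locChrom Gᶜ + Nat.clog 2 (Fintype.card V) :=
    minrank_le_of_rep G u hrep hrloc
  refine ⟨?_, h2⟩
  have hcast : (minrank (ZMod 2) G : ℝ)
      ≤ (locChrom Gᶜ : ℝ) + (Nat.clog 2 (Fintype.card V) : ℝ) := by exact_mod_cast h2
  have hlog := clog_le_two_logb (Fintype.card V)
  linarith
end

section
/- Let H be the gadget graph on 6 vertices {i, a, b, j, c, d} whose edges are: the triangle {i,a,b}, the triangle {j,c,d}, and the matching edges {i,d}, {a,j}, {b,c}. Let F be a field, U a 3-dimensional subspace of F^t, and suppose (u_v) is an orthogonal representation of H over F with all vectors lying in U. Then either ⟨u_i, u_j⟩ = 0 or u_i = α·u_j for some α ∈ F. -/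
open Matrix

/-- The gadget graph `H_{i,j}` on vertices `i=0, a=1, b=2, j=3, c=4, d=5`:
two triangles `{i,a,b}`, `{j,c,d}` and the matching edges `{i,d}, {a,j}, {b,c}`. -/
def gadgetGraph : SimpleGraph (Fin 6) :=
  SimpleGraph.fromEdgeSet
    {s(0, 1), s(0, 2), s(1, 2), s(3, 4), s(3, 5), s(4, 5), s(0, 5), s(1, 3), s(2, 4)}

theorem gadget_orthRep_cases {F : Type*} [Field F] {t : ℕ}
    (U : Submodule F (Fin t → F)) (hU : Module.finrank F U = 3)
    (u : Fin 6 → Fin t → F) (hrep : IsOrthRep gadgetGraph u)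
    (hmem : ∀ v, u v ∈ U) :
    u 0 ⬝ᵥ u 3 = 0 ∨ ∃ α : F, u 0 = α • u 3 := by
  obtain ⟨hself, hadj⟩ := hrep
  have h01 : u 0 ⬝ᵥ u 1 = 0 := hadj (by simp [gadgetGraph])
  have h02 : u 0 ⬝ᵥ u 2 = 0 := hadj (by simp [gadgetGraph])
  have h12 : u 1 ⬝ᵥ u 2 = 0 := hadj (by simp [gadgetGraph])
  have h34 : u 3 ⬝ᵥ u 4 = 0 := hadj (by simp [gadgetGraph])
  have h35 : u 3 ⬝ᵥ u 5 = 0 := hadj (by simp [gadgetGraph])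
  have h45 : u 4 ⬝ᵥ u 5 = 0 := hadj (by simp [gadgetGraph])
  have h05 : u 0 ⬝ᵥ u 5 = 0 := hadj (by simp [gadgetGraph])
  have h13 : u 1 ⬝ᵥ u 3 = 0 := hadj (by simp [gadgetGraph])
  have h24 : u 2 ⬝ᵥ u 4 = 0 := hadj (by simp [gadgetGraph])
  -- linear independence of u 0, u 1, u 2
  set v : Fin 3 → (Fin t → F) := ![u 0, u 1, u 2] with hv
  have hli : LinearIndependent F v := by
    rw [Fintype.linearIndependent_iff]
    intro g hg
    have e0 : (∑ i, g i • v i) ⬝ᵥ u 0 = 0 := by rw [hg]; simp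
    have e1 : (∑ i, g i • v i) ⬝ᵥ u 1 = 0 := by rw [hg]; simp
    have e2 : (∑ i, g i • v i) ⬝ᵥ u 2 = 0 := by rw [hg]; simp
    rw [Fin.sum_univ_three] at e0 e1 e2
    simp only [hv, Matrix.cons_val_zero, Matrix.cons_val_one, Matrix.head_cons,
      Matrix.cons_val_two, Matrix.tail_cons, add_dotProduct, smul_dotProduct,
      smul_eq_mul] at e0 e1 e2
    rw [dotProduct_comm (u 1) (u 0), dotProduct_comm (u 2) (u 0)] at e0
    rw [dotProduct_comm (u 2) (u 1)] at e1
    rw [h01, h02] at e0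
    rw [h01, h12] at e1
    rw [h02, h12] at e2
    simp only [mul_zero, zero_add, add_zero] at e0 e1 e2
    have g0 : g 0 = 0 := by
      rcases mul_eq_zero.mp e0 with h | h
      · exact h
      · exact absurd h (hself 0)
    have g1 : g 1 = 0 := by
      rcases mul_eq_zero.mp e1 with h | h
      · exact h
      · exact absurd h (hself 1)
    have g2 : g 2 = 0 := by
      rcases mul_eq_zero.mp e2 with h | h
      · exact h
      · exact absurd h (hself 2)
    intro i; fin_cases i <;> assumption
  -- span of u0,u1,u2 = U
  have hle : Submodule.span F (Set.range v) ≤ U := by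
    rw [Submodule.span_le]
    rintro x ⟨i, rfl⟩
    fin_cases i <;> simp [hv, hmem]
  have hspan : Submodule.span F (Set.range v) = U := by
    apply Submodule.eq_of_le_of_finrank_le hle
    rw [hU, finrank_span_eq_card hli]
    simp
  have hdecomp : ∀ w : Fin 6, ∃ c : Fin 3 → F,
      u w = c 0 • u 0 + c 1 • u 1 + c 2 • u 2 := by
    intro w
    have : u w ∈ Submodule.span F (Set.range v) := hspan ▸ hmem w
    rw [Submodule.mem_span_range_iff_exists_fun] at this
    obtain ⟨c, hc⟩ := this
    refine ⟨c, ?_⟩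
    rw [← hc, Fin.sum_univ_three]
    simp [hv]
  obtain ⟨c, hc⟩ := hdecomp 3
  obtain ⟨d, hd⟩ := hdecomp 4
  obtain ⟨e, he⟩ := hdecomp 5
  -- c 1 = 0 from u1 ⬝ u3 = 0
  have A0 := hself 0
  have A1 := hself 1
  have A2 := hself 2
  have dc : ∀ i : Fin 6, ∀ x : Fin 3 → F,
      u i = x 0 • u 0 + x 1 • u 1 + x 2 • u 2 →
      (u 0 ⬝ᵥ u i = x 0 * (u 0 ⬝ᵥ u 0)) ∧ (u 1 ⬝ᵥ u i = x 1 * (u 1 ⬝ᵥ u 1)) ∧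
      (u 2 ⬝ᵥ u i = x 2 * (u 2 ⬝ᵥ u 2)) := by
    intro i x hx
    rw [hx]
    simp only [dotProduct_add, dotProduct_smul, smul_eq_mul]
    rw [dotProduct_comm (u 1) (u 0), dotProduct_comm (u 2) (u 0),
      dotProduct_comm (u 2) (u 1)]  -- careful: need for each of three
    constructor
    · rw [h01, h02]; ring
    constructor
    · rw [h01, h12]; ring
    · rw [h02, h12]; ring
  obtain ⟨hc0, hc1, hc2⟩ := dc 3 c hc
  obtain ⟨hd0, hd1, hd2⟩ := dc 4 d hd
  obtain ⟨he0, he1, he2⟩ := dc 5 e he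
  have c1z : c 1 = 0 := by
    rw [h13] at hc1
    rcases mul_eq_zero.mp hc1.symm with h | h
    · exact h
    · exact absurd h A1
  have d2z : d 2 = 0 := by
    rw [h24] at hd2
    rcases mul_eq_zero.mp hd2.symm with h | h
    · exact h
    · exact absurd h A2
  have e0z : e 0 = 0 := by
    rw [h05] at he0
    rcases mul_eq_zero.mp he0.symm with h | h
    · exact h
    · exact absurd h A0
  by_cases h03 : u 0 ⬝ᵥ u 3 = 0
  · exact Or.inl h03
  right
  have c0ne : c 0 ≠ 0 := by
    intro h
    rw [h, zero_mul] at hc0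
    exact h03 hc0
  -- u3 ⬝ u4 = 0 : c0 d0 A0 + c2 d2 A2 ... compute
  have hdot : ∀ x y : Fin 3 → F,
      (x 0 • u 0 + x 1 • u 1 + x 2 • u 2) ⬝ᵥ (y 0 • u 0 + y 1 • u 1 + y 2 • u 2)
      = x 0 * y 0 * (u 0 ⬝ᵥ u 0) + x 1 * y 1 * (u 1 ⬝ᵥ u 1) + x 2 * y 2 * (u 2 ⬝ᵥ u 2) := by
    intro x y
    simp only [dotProduct_add, add_dotProduct, dotProduct_smul, smul_dotProduct, smul_eq_mul]
    rw [dotProduct_comm (u 1) (u 0), dotProduct_comm (u 2) (u 0), dotProduct_comm (u 2) (u 1)]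
    rw [h01, h02, h12]
    ring
  have e34 : c 0 * d 0 * (u 0 ⬝ᵥ u 0) = 0 := by
    have := h34
    rw [hc, hd, hdot] at this
    rw [c1z, d2z] at this
    simpa using this
  have d0z : d 0 = 0 := by
    rcases mul_eq_zero.mp e34 with h | h
    · rcases mul_eq_zero.mp h with h' | h'
      · exact absurd h' c0ne
      · exact h'
    · exact absurd h A0
  have d1ne : d 1 ≠ 0 := by
    intro h
    apply hself 4
    rw [hd, d0z, d2z, h]
    simp
  have e45 : d 1 * e 1 * (u 1 ⬝ᵥ u 1) = 0 := by
    have := h45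
    rw [hd, he, hdot] at this
    rw [d0z, d2z, e0z] at this
    simpa using this
  have e1z : e 1 = 0 := by
    rcases mul_eq_zero.mp e45 with h | h
    · rcases mul_eq_zero.mp h with h' | h'
      · exact absurd h' d1ne
      · exact h'
    · exact absurd h A1
  have e2ne : e 2 ≠ 0 := by
    intro h
    apply hself 5
    rw [he, e0z, e1z, h]
    simp
  have e35 : c 2 * e 2 * (u 2 ⬝ᵥ u 2) = 0 := by
    have := h35
    rw [hc, he, hdot] at this
    rw [c1z, e0z, e1z] at this
    simpa using this
  have c2z : c 2 = 0 := by
    rcases mul_eq_zero.mp e35 with h | h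
    · rcases mul_eq_zero.mp h with h' | h'
      · exact h'
      · exact absurd h' e2ne
    · exact absurd h A2
  refine ⟨(c 0)⁻¹, ?_⟩
  rw [hc, c1z, c2z]
  simp [smul_smul, inv_mul_cancel₀ c0ne]
end
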